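/- With the notation of the splicing construction, the rotated–translated copy u of r₂ satisfies u''(L₁) = r₁''(L₁); consequently the spliced curve r : [0, L₁+L₂] → ℝ³ is twice continuously differentiable (C²). -/

import Mathlib

open Set Metric Real

noncomputable section

/-- Points of `ℝ³` with the Euclidean norm. -/
abbrev E3 := EuclideanSpace ℝ (Fin 3)

def vec3 (x y z : ℝ) : E3 := WithLp.toLp 2 ![x, y, z]

/-- The cross product on `ℝ³`. -/
def cross3 (u v : E3) : E3 :=
  vec3 (u 1 * v 2 - u 2 * v 1) (u 2 * v 0 - u 0 * v 2) (u 0 * v 1 - u 1 * v 0)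

/-- The unit tangent `T(s) = r'(s)` of a unit-speed curve `r : [0, L] → ℝ³`. -/
def tang (f : ℝ → E3) (L s : ℝ) : E3 := derivWithin f (Icc 0 L) s

/-- The acceleration `r''(s)` of a curve `r : [0, L] → ℝ³`. -/
def acc (f : ℝ → E3) (L s : ℝ) : E3 :=
  derivWithin (fun t => derivWithin f (Icc 0 L) t) (Icc 0 L) s

/-- The principal normal `N(s) = r''(s)/‖r''(s)‖`. -/
def nor (f : ℝ → E3) (L s : ℝ) : E3 := ‖acc f L s‖⁻¹ • acc f L s

/-- The binormal `B(s) = T(s) × N(s)`. -/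
def binor (f : ℝ → E3) (L s : ℝ) : E3 := cross3 (tang f L s) (nor f L s)

/-- `f` is a C² unit-speed curve on `[0, L]` of constant curvature `κ`. -/
def IsUnitSpeedCC (f : ℝ → E3) (L κ : ℝ) : Prop :=
  ContDiffOn ℝ 2 f (Icc 0 L) ∧ (∀ s ∈ Icc 0 L, ‖tang f L s‖ = 1) ∧
    ∀ s ∈ Icc 0 L, ‖acc f L s‖ = κ

/-- The unique rotation `A` carrying the Frenet frame of `f₂ : [0,L₂] → ℝ³` at `0`
to the Frenet frame of `f₁ : [0,L₁] → ℝ³` at `L₁`:  for orthonormal frames it is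
`x ↦ ⟪x,T₂(0)⟫ T₁(L₁) + ⟪x,N₂(0)⟫ N₁(L₁) + ⟪x,B₂(0)⟫ B₁(L₁)`. -/
def frameRot (f₁ : ℝ → E3) (L₁ : ℝ) (f₂ : ℝ → E3) (L₂ : ℝ) : E3 → E3 := fun x =>
  (inner ℝ x (tang f₂ L₂ 0) : ℝ) • tang f₁ L₁ L₁ + (inner ℝ x (nor f₂ L₂ 0) : ℝ) • nor f₁ L₁ L₁
    + (inner ℝ x (binor f₂ L₂ 0) : ℝ) • binor f₁ L₁ L₁

/-- The rotated–translated copy `u(s) = A(r₂(s − L₁)) + w`, `w = r₁(L₁) − A(r₂(0))`. -/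
def rotCopy (f₁ : ℝ → E3) (L₁ : ℝ) (f₂ : ℝ → E3) (L₂ : ℝ) : ℝ → E3 := fun s =>
  frameRot f₁ L₁ f₂ L₂ (f₂ (s - L₁)) + (f₁ L₁ - frameRot f₁ L₁ f₂ L₂ (f₂ 0))

/-- The splice `r₁ * r₂ : [0, L₁ + L₂] → ℝ³`: it agrees with `r₁` on `[0, L₁]` and
with the rotated–translated copy `u` of `r₂` on `[L₁, L₁ + L₂]`. -/
def spliceFun (f₁ : ℝ → E3) (L₁ : ℝ) (f₂ : ℝ → E3) (L₂ : ℝ) : ℝ → E3 := fun s =>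
  if s ≤ L₁ then f₁ s else rotCopy f₁ L₁ f₂ L₂ s



open Topology

lemma inner_cross_left (u v : E3) : (inner ℝ (cross3 u v) u : ℝ) = 0 := by
  simp only [cross3, vec3, PiLp.inner_apply, RCLike.inner_apply, Fin.sum_univ_three,
    conj_trivial, Matrix.cons_val_zero, Matrix.cons_val_one, Matrix.head_cons,
    Matrix.cons_val_two, Matrix.tail_cons]
  ring

lemma inner_cross_right (u v : E3) : (inner ℝ (cross3 u v) v : ℝ) = 0 := by
  simp only [cross3, vec3, PiLp.inner_apply, RCLike.inner_apply, Fin.sum_univ_three,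
    conj_trivial, Matrix.cons_val_zero, Matrix.cons_val_one, Matrix.head_cons,
    Matrix.cons_val_two, Matrix.tail_cons]
  ring

-- glue lemma
variable {E : Type*} [NormedAddCommGroup E] [NormedSpace ℝ E]

lemma glue_hasDeriv {a b c : ℝ} (hab : a ≤ b) (hbc : b ≤ c)
    {f₁ f₂ g₁ g₂ : ℝ → E}
    (hf₁ : ∀ s ∈ Icc a b, HasDerivWithinAt f₁ (g₁ s) (Icc a b) s)
    (hf₂ : ∀ s ∈ Icc b c, HasDerivWithinAt f₂ (g₂ s) (Icc b c) s)
    (hval : f₁ b = f₂ b) (hder : g₁ b = g₂ b) :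
    ∀ s ∈ Icc a c, HasDerivWithinAt (fun t => if t ≤ b then f₁ t else f₂ t)
      (if s ≤ b then g₁ s else g₂ s) (Icc a c) s := by
  intro s hs
  rcases lt_trichotomy s b with h | heq | h
  · rw [if_pos h.le]
    have hmem : Icc a b ∈ 𝓝[Icc a c] s := by
      refine Filter.mem_of_superset (Filter.inter_mem self_mem_nhdsWithin
        (mem_nhdsWithin_of_mem_nhds (Iio_mem_nhds h))) ?_
      rintro t ⟨ht, ht'⟩; exact ⟨ht.1, (mem_Iio.1 ht').le⟩
    have h1 := (hf₁ s ⟨hs.1, h.le⟩).mono_of_mem_nhdsWithin hmem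
    refine h1.congr_of_eventuallyEq ?_ (if_pos h.le)
    filter_upwards [mem_nhdsWithin_of_mem_nhds (Iio_mem_nhds h)] with t ht
    exact if_pos (mem_Iio.1 ht).le
  · subst heq
    rw [if_pos le_rfl]
    have h1 : HasDerivWithinAt (fun t => if t ≤ s then f₁ t else f₂ t) (g₁ s) (Icc a s) s :=
      (hf₁ s ⟨hab, le_rfl⟩).congr (fun t ht => if_pos ht.2) (if_pos le_rfl)
    have h2 : HasDerivWithinAt (fun t => if t ≤ s then f₁ t else f₂ t) (g₁ s) (Icc s c) s := by
      rw [hder]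
      refine (hf₂ s ⟨le_rfl, hbc⟩).congr (fun t ht => ?_) (by rw [if_pos le_rfl, hval])
      rcases eq_or_lt_of_le ht.1 with h' | h'
      · rw [← h', if_pos le_rfl, hval]
      · rw [if_neg (not_le.2 h')]
    have := h1.union h2
    rwa [Icc_union_Icc_eq_Icc hab hbc] at this
  · rw [if_neg (not_le.2 h)]
    have hmem : Icc b c ∈ 𝓝[Icc a c] s := by
      refine Filter.mem_of_superset (Filter.inter_mem self_mem_nhdsWithin
        (mem_nhdsWithin_of_mem_nhds (Ioi_mem_nhds h))) ?_
      rintro t ⟨ht, ht'⟩; exact ⟨(mem_Ioi.1 ht').le, ht.2⟩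
    have h1 := (hf₂ s ⟨h.le, hs.2⟩).mono_of_mem_nhdsWithin hmem
    refine h1.congr_of_eventuallyEq ?_ (if_neg (not_le.2 h))
    filter_upwards [mem_nhdsWithin_of_mem_nhds (Ioi_mem_nhds h)] with t ht
    exact if_neg (not_le.2 (mem_Ioi.1 ht))

lemma glue_continuousOn {a b c : ℝ} (hab : a ≤ b) (hbc : b ≤ c)
    {f₁ f₂ : ℝ → E}
    (h1 : ContinuousOn f₁ (Icc a b)) (h2 : ContinuousOn f₂ (Icc b c))
    (hval : f₁ b = f₂ b) :
    ContinuousOn (fun t => if t ≤ b then f₁ t else f₂ t) (Icc a c) := by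
  intro s hs
  rcases lt_trichotomy s b with h | heq | h
  · have hmem : Icc a b ∈ 𝓝[Icc a c] s := by
      refine Filter.mem_of_superset (Filter.inter_mem self_mem_nhdsWithin
        (mem_nhdsWithin_of_mem_nhds (Iio_mem_nhds h))) ?_
      rintro t ⟨ht, ht'⟩; exact ⟨ht.1, (mem_Iio.1 ht').le⟩
    refine ((h1 s ⟨hs.1, h.le⟩).mono_of_mem_nhdsWithin hmem).congr_of_eventuallyEq ?_ (if_pos h.le)
    filter_upwards [mem_nhdsWithin_of_mem_nhds (Iio_mem_nhds h)] with t ht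
    exact if_pos (mem_Iio.1 ht).le
  · subst heq
    have hA : ContinuousWithinAt (fun t => if t ≤ s then f₁ t else f₂ t) (Icc a s) s :=
      (h1 s ⟨hab, le_rfl⟩).congr (fun t ht => if_pos ht.2) (if_pos le_rfl)
    have hB : ContinuousWithinAt (fun t => if t ≤ s then f₁ t else f₂ t) (Icc s c) s := by
      refine (h2 s ⟨le_rfl, hbc⟩).congr (fun t ht => ?_) (by rw [if_pos le_rfl, hval])
      rcases eq_or_lt_of_le ht.1 with h' | h'
      · rw [← h', if_pos le_rfl, hval]
      · rw [if_neg (not_le.2 h')]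
    have := hA.union hB
    rwa [Icc_union_Icc_eq_Icc hab hbc] at this
  · have hmem : Icc b c ∈ 𝓝[Icc a c] s := by
      refine Filter.mem_of_superset (Filter.inter_mem self_mem_nhdsWithin
        (mem_nhdsWithin_of_mem_nhds (Ioi_mem_nhds h))) ?_
      rintro t ⟨ht, ht'⟩; exact ⟨(mem_Ioi.1 ht').le, ht.2⟩
    refine ((h2 s ⟨h.le, hs.2⟩).mono_of_mem_nhdsWithin hmem).congr_of_eventuallyEq ?_
      (if_neg (not_le.2 h))
    filter_upwards [mem_nhdsWithin_of_mem_nhds (Ioi_mem_nhds h)] with t ht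
    exact if_neg (not_le.2 (mem_Ioi.1 ht))

/-- with the notation of the splicing construction, `u''(L₁) = r₁''(L₁)`;
consequently the spliced curve `r : [0, L₁+L₂] → ℝ³` is C². -/
theorem splice_C2 (r₁ r₂ : ℝ → E3) (L₁ L₂ κ : ℝ)
    (hL₁ : 0 < L₁) (hL₂ : 0 < L₂) (hκ : 0 < κ)
    (h₁ : IsUnitSpeedCC r₁ L₁ κ) (h₂ : IsUnitSpeedCC r₂ L₂ κ) :
    derivWithin (fun t => derivWithin (rotCopy r₁ L₁ r₂ L₂) (Icc L₁ (L₁ + L₂)) t)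
        (Icc L₁ (L₁ + L₂)) L₁
      = derivWithin (fun t => derivWithin r₁ (Icc 0 L₁) t) (Icc 0 L₁) L₁ ∧
    ContDiffOn ℝ 2 (spliceFun r₁ L₁ r₂ L₂) (Icc 0 (L₁ + L₂)) := by

  obtain ⟨hc₁, ht₁, ha₁⟩ := h₁
  obtain ⟨hc₂, ht₂, ha₂⟩ := h₂
  have hL : L₁ ≤ L₁ + L₂ := by linarith
  have U₁ : UniqueDiffOn ℝ (Icc (0:ℝ) L₁) := uniqueDiffOn_Icc hL₁
  have U₂ : UniqueDiffOn ℝ (Icc L₁ (L₁ + L₂)) := uniqueDiffOn_Icc (by linarith)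
  have UJ : UniqueDiffOn ℝ (Icc (0:ℝ) L₂) := uniqueDiffOn_Icc hL₂
  have US : UniqueDiffOn ℝ (Icc (0:ℝ) (L₁ + L₂)) := uniqueDiffOn_Icc (by linarith)
  have h21 : (2 : WithTop ℕ∞) = 1 + 1 := by norm_num
  have h10 : (1 : WithTop ℕ∞) = 0 + 1 := by norm_num
  have d₁ : DifferentiableOn ℝ r₁ (Icc 0 L₁) := hc₁.differentiableOn (by norm_num)
  have d₂ : DifferentiableOn ℝ r₂ (Icc 0 L₂) := hc₂.differentiableOn (by norm_num)
  have hcd₁ : ContDiffOn ℝ 1 (derivWithin r₁ (Icc 0 L₁)) (Icc 0 L₁) := by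
    rw [h21] at hc₁
    exact ((contDiffOn_succ_iff_derivWithin U₁).1 hc₁).2.2
  have hcd₂ : ContDiffOn ℝ 1 (derivWithin r₂ (Icc 0 L₂)) (Icc 0 L₂) := by
    rw [h21] at hc₂
    exact ((contDiffOn_succ_iff_derivWithin UJ).1 hc₂).2.2
  have dd₁ : DifferentiableOn ℝ (derivWithin r₁ (Icc 0 L₁)) (Icc 0 L₁) :=
    hcd₁.differentiableOn one_ne_zero
  have dd₂ : DifferentiableOn ℝ (derivWithin r₂ (Icc 0 L₂)) (Icc 0 L₂) :=
    hcd₂.differentiableOn one_ne_zero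
  have contAcc₁ : ContinuousOn (acc r₁ L₁) (Icc 0 L₁) := by
    rw [h10] at hcd₁
    exact contDiffOn_zero.1 ((contDiffOn_succ_iff_derivWithin U₁).1 hcd₁).2.2
  have contAcc₂ : ContinuousOn (acc r₂ L₂) (Icc 0 L₂) := by
    rw [h10] at hcd₂
    exact contDiffOn_zero.1 ((contDiffOn_succ_iff_derivWithin UJ).1 hcd₂).2.2
  have h0J : (0:ℝ) ∈ Icc (0:ℝ) L₂ := ⟨le_rfl, hL₂.le⟩
  have hL₁I : L₁ ∈ Icc (0:ℝ) L₁ := ⟨hL₁.le, le_rfl⟩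
  -- orthogonality of tangent and acceleration for r₂ at 0
  have hTd : HasDerivWithinAt (tang r₂ L₂) (acc r₂ L₂ 0) (Icc 0 L₂) 0 :=
    (dd₂ 0 h0J).hasDerivWithinAt
  have hperp : (inner ℝ (tang r₂ L₂ 0) (acc r₂ L₂ 0) : ℝ) = 0 := by
    have h1 : HasDerivWithinAt (fun t => (inner ℝ (tang r₂ L₂ t) (tang r₂ L₂ t) : ℝ))
        ((inner ℝ (tang r₂ L₂ 0) (acc r₂ L₂ 0) : ℝ) + (inner ℝ (acc r₂ L₂ 0) (tang r₂ L₂ 0) : ℝ))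
        (Icc 0 L₂) 0 := hTd.inner ℝ hTd
    have h2 : HasDerivWithinAt (fun t => (inner ℝ (tang r₂ L₂ t) (tang r₂ L₂ t) : ℝ))
        0 (Icc 0 L₂) 0 := by
      refine (hasDerivWithinAt_const 0 (Icc 0 L₂) (1:ℝ)).congr (fun t ht => ?_) ?_
      · rw [real_inner_self_eq_norm_mul_norm, ht₂ t ht, one_mul]
      · rw [real_inner_self_eq_norm_mul_norm, ht₂ 0 h0J, one_mul]
    have := (h1.derivWithin (UJ 0 h0J)).symm.trans (h2.derivWithin (UJ 0 h0J))
    rw [real_inner_comm (acc r₂ L₂ 0)] at this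
    rw [real_inner_comm]
    linarith
  -- frame inner products at 0 for r₂
  have hκ' : κ ≠ 0 := ne_of_gt hκ
  have hN₂ : nor r₂ L₂ 0 = κ⁻¹ • acc r₂ L₂ 0 := by rw [nor, ha₂ 0 h0J]
  have hTT : (inner ℝ (tang r₂ L₂ 0) (tang r₂ L₂ 0) : ℝ) = 1 := by
    rw [real_inner_self_eq_norm_mul_norm, ht₂ 0 h0J, one_mul]
  have hNT : (inner ℝ (nor r₂ L₂ 0) (tang r₂ L₂ 0) : ℝ) = 0 := by
    rw [hN₂, real_inner_smul_left, real_inner_comm, hperp, mul_zero]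
  have hTN : (inner ℝ (tang r₂ L₂ 0) (nor r₂ L₂ 0) : ℝ) = 0 := by
    rw [real_inner_comm]; exact hNT
  have hNN : (inner ℝ (nor r₂ L₂ 0) (nor r₂ L₂ 0) : ℝ) = 1 := by
    rw [real_inner_self_eq_norm_mul_norm, nor, norm_smul, ha₂ 0 h0J]
    rw [norm_inv, Real.norm_eq_abs, abs_of_pos hκ, inv_mul_cancel₀ hκ', one_mul]
  have hBT : (inner ℝ (binor r₂ L₂ 0) (tang r₂ L₂ 0) : ℝ) = 0 := inner_cross_left _ _
  have hBN : (inner ℝ (binor r₂ L₂ 0) (nor r₂ L₂ 0) : ℝ) = 0 := inner_cross_right _ _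
  -- the rotation as a continuous linear map
  set A : E3 →L[ℝ] E3 :=
    ((innerSL ℝ (tang r₂ L₂ 0)).smulRight (tang r₁ L₁ L₁))
      + ((innerSL ℝ (nor r₂ L₂ 0)).smulRight (nor r₁ L₁ L₁))
      + ((innerSL ℝ (binor r₂ L₂ 0)).smulRight (binor r₁ L₁ L₁)) with hAdef
  have hA : frameRot r₁ L₁ r₂ L₂ = A := by
    funext x
    simp only [hAdef, frameRot, ContinuousLinearMap.add_apply,
      ContinuousLinearMap.smulRight_apply, coe_innerSL_apply, innerSL_apply_apply]
    rw [real_inner_comm x (tang r₂ L₂ 0), real_inner_comm x (nor r₂ L₂ 0),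
      real_inner_comm x (binor r₂ L₂ 0)]
  have hAT : A (tang r₂ L₂ 0) = tang r₁ L₁ L₁ := by
    simp only [hAdef, ContinuousLinearMap.add_apply, ContinuousLinearMap.smulRight_apply,
      innerSL_apply_apply, hTT, hNT, hBT, one_smul, zero_smul, add_zero]
  have hAN : A (nor r₂ L₂ 0) = nor r₁ L₁ L₁ := by
    simp only [hAdef, ContinuousLinearMap.add_apply, ContinuousLinearMap.smulRight_apply,
      innerSL_apply_apply, hTN, hNN, hBN, one_smul, zero_smul, add_zero, zero_add]
  have hAacc : A (acc r₂ L₂ 0) = acc r₁ L₁ L₁ := by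
    have h1 : acc r₂ L₂ 0 = κ • nor r₂ L₂ 0 := by
      rw [hN₂, smul_smul, mul_inv_cancel₀ hκ', one_smul]
    rw [h1, map_smul, hAN, nor, ha₁ L₁ hL₁I, smul_smul, mul_inv_cancel₀ hκ', one_smul]
  -- derivatives of the rotated copy
  have hshift : ∀ s ∈ Icc L₁ (L₁ + L₂), s - L₁ ∈ Icc (0:ℝ) L₂ := by
    rintro s ⟨h1, h2⟩; exact ⟨by linarith, by linarith⟩
  have hcomp : ∀ (f : ℝ → E3) (v : E3), (∀ s ∈ Icc L₁ (L₁+L₂),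
      HasDerivWithinAt f (v) (Icc 0 L₂) (0:ℝ)) → True := fun _ _ _ => trivial
  have hu1 : ∀ s ∈ Icc L₁ (L₁ + L₂), HasDerivWithinAt (rotCopy r₁ L₁ r₂ L₂)
      (A (tang r₂ L₂ (s - L₁))) (Icc L₁ (L₁ + L₂)) s := by
    intro s hs
    have h0 : HasDerivWithinAt r₂ (tang r₂ L₂ (s - L₁)) (Icc 0 L₂) (s - L₁) :=
      (d₂ _ (hshift s hs)).hasDerivWithinAt
    have h1 : HasDerivWithinAt (fun t => r₂ (t - L₁)) (tang r₂ L₂ (s - L₁))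
        (Icc L₁ (L₁ + L₂)) s := by
      have := HasDerivWithinAt.scomp s h0 ((hasDerivWithinAt_id s _).sub_const L₁)
        (fun t ht => hshift t ht)
      rw [one_smul] at this; exact this
    have h2 := A.hasFDerivAt.comp_hasDerivWithinAt s h1
    have h3 := h2.add_const (r₁ L₁ - frameRot r₁ L₁ r₂ L₂ (r₂ 0))
    refine h3.congr (fun t _ => ?_) ?_ <;> simp [rotCopy, hA, Function.comp]
  have hu2 : ∀ s ∈ Icc L₁ (L₁ + L₂), HasDerivWithinAt (fun t => A (tang r₂ L₂ (t - L₁)))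
      (A (acc r₂ L₂ (s - L₁))) (Icc L₁ (L₁ + L₂)) s := by
    intro s hs
    have h0 : HasDerivWithinAt (tang r₂ L₂) (acc r₂ L₂ (s - L₁)) (Icc 0 L₂) (s - L₁) :=
      (dd₂ _ (hshift s hs)).hasDerivWithinAt
    have h1 : HasDerivWithinAt (fun t => tang r₂ L₂ (t - L₁)) (acc r₂ L₂ (s - L₁))
        (Icc L₁ (L₁ + L₂)) s := by
      have := HasDerivWithinAt.scomp s h0 ((hasDerivWithinAt_id s _).sub_const L₁)
        (fun t ht => hshift t ht)
      rw [one_smul] at this; exact this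
    have h2 := A.hasFDerivAt.comp_hasDerivWithinAt s h1
    exact h2.congr (fun t _ => rfl) rfl
  -- junction values
  have hvalF : r₁ L₁ = rotCopy r₁ L₁ r₂ L₂ L₁ := by
    simp only [rotCopy, sub_self]; abel
  have hderF : tang r₁ L₁ L₁ = A (tang r₂ L₂ (L₁ - L₁)) := by rw [sub_self]; exact hAT.symm
  have hderG : acc r₁ L₁ L₁ = A (acc r₂ L₂ (L₁ - L₁)) := by rw [sub_self]; exact hAacc.symm
  -- glued derivatives
  have Fh := glue_hasDeriv hL₁.le hL
    (f₁ := r₁) (f₂ := rotCopy r₁ L₁ r₂ L₂) (g₁ := tang r₁ L₁)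
    (g₂ := fun s => A (tang r₂ L₂ (s - L₁)))
    (fun s hs => (d₁ s hs).hasDerivWithinAt) hu1 hvalF hderF
  have Gh := glue_hasDeriv hL₁.le hL
    (f₁ := tang r₁ L₁) (f₂ := fun s => A (tang r₂ L₂ (s - L₁)))
    (g₁ := acc r₁ L₁) (g₂ := fun s => A (acc r₂ L₂ (s - L₁)))
    (fun s hs => (dd₁ s hs).hasDerivWithinAt) hu2 hderF hderG
  have Fh' : ∀ s ∈ Icc (0:ℝ) (L₁ + L₂), HasDerivWithinAt (spliceFun r₁ L₁ r₂ L₂)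
      ((fun t => if t ≤ L₁ then tang r₁ L₁ t else A (tang r₂ L₂ (t - L₁))) s)
      (Icc 0 (L₁ + L₂)) s := Fh
  have hFderiv : ∀ s ∈ Icc (0:ℝ) (L₁ + L₂), derivWithin (spliceFun r₁ L₁ r₂ L₂)
      (Icc 0 (L₁ + L₂)) s = (if s ≤ L₁ then tang r₁ L₁ s else A (tang r₂ L₂ (s - L₁))) :=
    fun s hs => (Fh' s hs).derivWithin (US s hs)
  have hGderiv : ∀ s ∈ Icc (0:ℝ) (L₁ + L₂),
      derivWithin (fun t => if t ≤ L₁ then tang r₁ L₁ t else A (tang r₂ L₂ (t - L₁)))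
        (Icc 0 (L₁ + L₂)) s = (if s ≤ L₁ then acc r₁ L₁ s else A (acc r₂ L₂ (s - L₁))) :=
    fun s hs => (Gh s hs).derivWithin (US s hs)
  constructor
  · -- second derivatives match at the junction
    have e1 : EqOn (derivWithin (rotCopy r₁ L₁ r₂ L₂) (Icc L₁ (L₁ + L₂)))
        (fun s => A (tang r₂ L₂ (s - L₁))) (Icc L₁ (L₁ + L₂)) :=
      fun s hs => (hu1 s hs).derivWithin (U₂ s hs)
    have hL₁mem : L₁ ∈ Icc L₁ (L₁ + L₂) := ⟨le_rfl, hL⟩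
    calc derivWithin (fun t => derivWithin (rotCopy r₁ L₁ r₂ L₂) (Icc L₁ (L₁ + L₂)) t)
          (Icc L₁ (L₁ + L₂)) L₁
        = derivWithin (fun t => A (tang r₂ L₂ (t - L₁))) (Icc L₁ (L₁ + L₂)) L₁ :=
          derivWithin_congr e1 (e1 hL₁mem)
      _ = A (acc r₂ L₂ (L₁ - L₁)) := (hu2 L₁ hL₁mem).derivWithin (U₂ L₁ hL₁mem)
      _ = derivWithin (fun t => derivWithin r₁ (Icc 0 L₁) t) (Icc 0 L₁) L₁ := by
          rw [sub_self]; exact hAacc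
  · -- C² regularity
    rw [h21, contDiffOn_succ_iff_derivWithin US]
    refine ⟨fun s hs => (Fh' s hs).differentiableWithinAt, by simp, ?_⟩
    have hG : ContDiffOn ℝ 1
        (fun t => if t ≤ L₁ then tang r₁ L₁ t else A (tang r₂ L₂ (t - L₁)))
        (Icc 0 (L₁ + L₂)) := by
      rw [h10, contDiffOn_succ_iff_derivWithin US]
      refine ⟨fun s hs => (Gh s hs).differentiableWithinAt, by simp, ?_⟩
      have contAccU : ContinuousOn (fun s => A (acc r₂ L₂ (s - L₁))) (Icc L₁ (L₁ + L₂)) := by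
        refine A.continuous.comp_continuousOn ?_
        exact contAcc₂.comp ((continuous_id.sub continuous_const).continuousOn) hshift
      have hH : ContinuousOn (fun t => if t ≤ L₁ then acc r₁ L₁ t
          else A (acc r₂ L₂ (t - L₁))) (Icc 0 (L₁ + L₂)) :=
        glue_continuousOn hL₁.le hL contAcc₁ contAccU hderG
      rw [contDiffOn_zero]
      exact hH.congr hGderiv
    exact hG.congr hFderiv
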